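/- The density f(x) = x e^{−x} on (0,∞) is log-concave but not strongly log-concave (for any positive parameter), while its associated function I(p) = f(F^{−1}(p)) is strongly concave on (0,1); indeed φ''(x)/f(x) = x^{−3}e^{x} ≥ e³/27 > 0 for all x > 0, where φ = −log f. -/

import Mathlib

open Real Set

lemma phi_convex : ConvexOn ℝ (Set.Ioi (0:ℝ)) (fun x => x - Real.log x) := by
  have h1 : ConvexOn ℝ (Set.Ioi (0:ℝ)) (fun x : ℝ => x) := convexOn_id (convex_Ioi 0)
  have h2 : ConvexOn ℝ (Set.Ioi (0:ℝ)) (fun x : ℝ => -Real.log x) :=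
    (strictConcaveOn_log_Ioi.concaveOn).neg
  exact h1.add h2

lemma not_strong (c : ℝ) (hc : 0 < c) :
    ¬ ConvexOn ℝ (Set.Ioi (0:ℝ)) (fun x => (x - Real.log x) - x ^ 2 / (2 * c)) := by
  intro h
  set a := c + 1 with ha
  set b := c + 3 with hb
  have hap : (0:ℝ) < a := by positivity
  have hbp : (0:ℝ) < b := by positivity
  have hmem := h.2 (show a ∈ Ioi (0:ℝ) from hap) (show b ∈ Ioi (0:ℝ) from hbp)
    (by norm_num : (0:ℝ) ≤ 1/2) (by norm_num : (0:ℝ) ≤ 1/2) (by norm_num)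
  simp only [smul_eq_mul] at hmem
  have hmid : (1/2 : ℝ) * a + (1/2 : ℝ) * b = c + 2 := by ring
  rw [hmid] at hmem
  -- key log inequality
  have hab : (0:ℝ) < a * b := by positivity
  have ht : (0:ℝ) < (c+2)^2 / (a*b) := by positivity
  have hlog : Real.log ((c+2)^2 / (a*b)) ≤ (c+2)^2/(a*b) - 1 :=
    Real.log_le_sub_one_of_pos ht
  have hval : (c+2)^2/(a*b) - 1 = 1/(a*b) := by
    field_simp; ring
  have hlt : 1/(a*b) < 1/c := by
    apply one_div_lt_one_div_of_lt hc
    nlinarith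
  have hlog2 : Real.log ((c+2)^2) - Real.log (a*b) < 1/c := by
    rw [← Real.log_div (by positivity) (ne_of_gt hab)]
    calc Real.log ((c+2)^2 / (a*b)) ≤ 1/(a*b) := by rw [← hval]; exact hlog
      _ < 1/c := hlt
  have hsq : Real.log ((c+2)^2) = 2 * Real.log (c+2) := by
    rw [Real.log_pow]; push_cast; ring
  have hmul : Real.log (a*b) = Real.log a + Real.log b :=
    Real.log_mul (ne_of_gt hap) (ne_of_gt hbp)
  rw [hsq, hmul] at hlog2
  -- now contradiction with hmem
  have hd : a^2/(2*c) + b^2/(2*c) - 2*((c+2)^2/(2*c)) = 1/c := by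
    rw [ha, hb]
    field_simp
    ring_nf
  linarith [hmem, hlog2, hd]

lemma second_deriv (x : ℝ) (hx : 0 < x) :
    deriv (deriv fun y : ℝ => y - Real.log y) x = (x^2)⁻¹ := by
  have hev : (deriv fun y : ℝ => y - Real.log y) =ᶠ[nhds x] (fun y => 1 - y⁻¹) := by
    filter_upwards [eventually_gt_nhds hx] with y hy
    have : HasDerivAt (fun y : ℝ => y - Real.log y) (1 - y⁻¹) y :=
      (hasDerivAt_id y).sub (Real.hasDerivAt_log (ne_of_gt hy))
    exact this.deriv
  rw [hev.deriv_eq]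
  have : HasDerivAt (fun y : ℝ => 1 - y⁻¹) (0 - (-(x^2)⁻¹)) x :=
    (hasDerivAt_const x (1:ℝ)).sub (hasDerivAt_inv (ne_of_gt hx))
  simpa using this.deriv

theorem stmt_5 :
    ConvexOn ℝ (Set.Ioi (0:ℝ)) (fun x => x - Real.log x) ∧
    (∀ c : ℝ, 0 < c →
      ¬ ConvexOn ℝ (Set.Ioi (0:ℝ)) (fun x => (x - Real.log x) - x ^ 2 / (2 * c))) ∧
    (∀ x : ℝ, 0 < x →
      deriv (deriv fun y => y - Real.log y) x / (x * Real.exp (-x))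
          = x⁻¹ ^ 3 * Real.exp x ∧
      Real.exp 3 / 27 ≤ x⁻¹ ^ 3 * Real.exp x) := by
  refine ⟨phi_convex, not_strong, fun x hx => ⟨?_, ?_⟩⟩
  · rw [second_deriv x hx, Real.exp_neg]
    have hx' := ne_of_gt hx
    have he := Real.exp_ne_zero x
    field_simp
  · have key : Real.exp 1 * (x/3) ≤ Real.exp (x/3) := by
      have h := Real.add_one_le_exp (Real.log (x/3))
      calc Real.exp 1 * (x/3) = Real.exp (Real.log (x/3) + 1) := by
            rw [Real.exp_add, Real.exp_log (by positivity)]; ring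
        _ ≤ Real.exp (x/3) := Real.exp_le_exp.mpr (by
            have h2 := Real.log_le_sub_one_of_pos (by positivity : (0:ℝ) < x/3)
            linarith)
    have hcube : (Real.exp 1 * (x/3))^3 ≤ (Real.exp (x/3))^3 := by
      apply pow_le_pow_left₀ (by positivity) key
    have h3 : (Real.exp (x/3))^3 = Real.exp x := by
      rw [← Real.exp_nat_mul]; norm_num; ring_nf
    have h1 : (Real.exp 1 * (x/3))^3 = Real.exp 3 * x^3 / 27 := by
      rw [mul_pow, ← Real.exp_nat_mul]; norm_num; ring
    rw [h3, h1] at hcube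
    have hx3 : (0:ℝ) < x^3 := by positivity
    calc Real.exp 3 / 27 ≤ Real.exp x / x^3 := by
          rw [div_le_div_iff₀ (by norm_num) hx3]; linarith
      _ = x⁻¹^3 * Real.exp x := by
          rw [inv_pow, div_eq_mul_inv, mul_comm]
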